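/- Let C_t = C(2t,t)·2^t and D_t = Σ_{j=1}^{t} (-1)^(j-1)·C_{t-j}. Then D_t / C_t → 1/9 as t → ∞. -/

import Mathlib

def C (t : ℕ) : ℕ := Nat.choose (2 * t) t * 2 ^ t

def D (t : ℕ) : ℤ := ∑ j ∈ Finset.range t, (-1) ^ j * (C (t - 1 - j) : ℤ)

lemma C_pos (t : ℕ) : 0 < C t :=
  Nat.mul_pos (Nat.choose_pos (by omega)) (pow_pos two_pos t)

lemma C_rec (t : ℕ) : (t + 1) * C (t + 1) = (8 * t + 4) * C t := by
  have h := Nat.succ_mul_centralBinom_succ t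
  have e1 : C (t + 1) = Nat.centralBinom (t + 1) * 2 ^ (t + 1) := rfl
  have e2 : C t = Nat.centralBinom t * 2 ^ t := rfl
  rw [e1, e2, pow_succ, ← mul_assoc, h]
  ring

lemma D_rec (t : ℕ) : D (t + 1) = (C t : ℤ) - D t := by
  unfold D
  rw [Finset.sum_range_succ']
  have h1 : ∀ i ∈ Finset.range t,
      ((-1:ℤ))^(i+1) * (C (t + 1 - 1 - (i+1)) : ℤ)
        = -(((-1:ℤ))^i * (C (t - 1 - i) : ℤ)) := by
    intro i _
    have : t + 1 - 1 - (i + 1) = t - 1 - i := by omega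
    rw [this, pow_succ]; ring
  rw [Finset.sum_congr rfl h1, Finset.sum_neg_distrib]
  simp
  ring

lemma key : ∀ t : ℕ, 1 ≤ t → |((D t : ℝ) / (C t : ℝ)) - 1/9| ≤ 1 / t := by
  intro t ht
  induction t, ht using Nat.le_induction with
  | base =>
    have : (D 1 : ℝ) / (C 1 : ℝ) = 1/4 := by norm_num [D, C, Finset.sum_range_one]
    rw [this]
    rw [show (1:ℝ)/4 - 1/9 = 5/36 by norm_num, abs_of_nonneg (by norm_num)]
    norm_num
  | succ t ht ih =>
    have hct : (0:ℝ) < (C t : ℝ) := by exact_mod_cast C_pos t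
    have hct1 : (0:ℝ) < (C (t+1) : ℝ) := by exact_mod_cast C_pos (t+1)
    have ht0 : (1:ℝ) ≤ (t:ℝ) := by exact_mod_cast ht
    have hc : ((t:ℝ) + 1) * (C (t+1) : ℝ) = (8*(t:ℝ)+4) * (C t : ℝ) := by
      exact_mod_cast C_rec t
    set rt : ℝ := (D t : ℝ) / (C t : ℝ) with hrt
    have hd : (D (t+1) : ℝ) = (C t : ℝ) - (D t : ℝ) := by
      exact_mod_cast D_rec t
    set q : ℝ := ((t:ℝ)+1)/(8*(t:ℝ)+4) with hq
    have hqpos : 0 < q := by positivity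
    have hqle : q ≤ 1/4 := by
      rw [hq, div_le_div_iff₀ (by positivity) (by norm_num)]
      nlinarith
    have hform : (D (t+1) : ℝ) / (C (t+1) : ℝ) = q * (1 - rt) := by
      rw [hd, hq, hrt]
      field_simp
      linear_combination ((D t : ℝ) - (C t : ℝ)) * hc
    rw [hform]
    have hsplit : q * (1 - rt) - 1/9 = -(q * (rt - 1/9)) + 4/(9*(8*(t:ℝ)+4)) := by
      rw [hq]; field_simp; ring
    rw [hsplit]
    have h1 : |(-(q * (rt - 1/9)) + 4/(9*(8*(t:ℝ)+4)))|
        ≤ q * |rt - 1/9| + 4/(9*(8*(t:ℝ)+4)) := by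
      have ha := abs_add_le (-(q * (rt - 1/9))) (4/(9*(8*(t:ℝ)+4)))
      have hb : |(4:ℝ)/(9*(8*(t:ℝ)+4))| = 4/(9*(8*(t:ℝ)+4)) :=
        abs_of_nonneg (by positivity)
      rw [abs_neg, abs_mul, abs_of_pos hqpos, hb] at ha
      exact ha
    refine h1.trans ?_
    have h2 : q * |rt - 1/9| ≤ (1/4) * (1/t) := by
      apply mul_le_mul hqle (ih) (abs_nonneg _) (by norm_num)
    have h3 : (1/4) * (1/(t:ℝ)) + 4/(9*(8*(t:ℝ)+4)) ≤ 1/((t:ℝ)+1) := by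
      rw [show (1/4) * (1/(t:ℝ)) = 1/(4*(t:ℝ)) by ring,
        div_add_div _ _ (by positivity) (by positivity),
        div_le_div_iff₀ (by positivity) (by positivity)]
      nlinarith
    push_cast
    linarith

theorem stmt18 :
    Filter.Tendsto (fun t : ℕ => (D t : ℝ) / (C t : ℝ)) Filter.atTop
      (nhds (1 / 9)) := by
  rw [← tendsto_sub_nhds_zero_iff]
  apply squeeze_zero_norm' ?_ tendsto_one_div_atTop_nhds_zero_nat
  filter_upwards [Filter.eventually_ge_atTop 1] with t ht
  simpa [Real.norm_eq_abs] using key t ht
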